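/- Let p be a prime and let n, d be positive integers. Then every ZMod (p^n)-submodule L of the free module (ZMod (p^n))^d admits a generating set of the following echelon form: there exist a natural number m ≤ d, an injective map τ : Fin m → Fin d, a monotone nondecreasing sequence of natural numbers i_1 ≤ i_2 ≤ … ≤ i_m with each i_j ≤ n - 1, and elements v_1, …, v_m generating L such that for each j: the τ(j)-th coordinate of v_j equals p^(i_j), the τ(j')-th coordinate of v_j equals 0 for every j' < j, and every coordinate of v_j is divisible by p^(i_j) (i.e., lies in p^(i_j)·(ZMod (p^n))). -/
import Mathlib

open Classical in
noncomputable def Supp9 {p n d : ℕ} (L : Submodule (ZMod (p^n)) (Fin d → ZMod (p^n))) :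
    Finset (Fin d) :=
  Finset.univ.filter (fun t => ∃ x ∈ L, x t ≠ 0)

lemma mem_Supp9 {p n d : ℕ} (L : Submodule (ZMod (p^n)) (Fin d → ZMod (p^n))) (t : Fin d) :
    t ∈ Supp9 L ↔ ∃ x ∈ L, x t ≠ 0 := by
  classical
  simp [Supp9]

lemma pow_p_ne_zero9 {p n : ℕ} (hp : p.Prime) {i : ℕ} (hi : i < n) :
    (p : ZMod (p^n)) ^ i ≠ 0 := by
  haveI : NeZero (p ^ n) := ⟨(pow_pos hp.pos n).ne'⟩
  rw [← Nat.cast_pow, Ne, ZMod.natCast_eq_zero_iff]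
  intro h
  have := (Nat.pow_dvd_pow_iff_le_right hp.one_lt).mp h
  omega

lemma exists_val9 {p n : ℕ} (hp : p.Prime) (x : ZMod (p^n)) (hx : x ≠ 0) :
    ∃ k, k < n ∧ ∃ u : ZMod (p^n), IsUnit u ∧ x = (p : ZMod (p^n)) ^ k * u := by
  haveI : NeZero (p ^ n) := ⟨(pow_pos hp.pos n).ne'⟩
  haveI : Fact p.Prime := ⟨hp⟩
  set a := x.val with ha
  have hxa : (a : ZMod (p^n)) = x := ZMod.natCast_rightInverse x
  have hav : a < p ^ n := ZMod.val_lt x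
  have ha0 : a ≠ 0 := by rw [ha, Ne, ZMod.val_eq_zero]; exact hx
  have hdvd : p ^ padicValNat p a ∣ a := pow_padicValNat_dvd
  obtain ⟨b, hb⟩ := hdvd
  have hnb : ¬ p ∣ b := by
    rintro ⟨c, hc⟩
    apply pow_succ_padicValNat_not_dvd (p := p) ha0
    refine ⟨c, ?_⟩
    calc a = p ^ padicValNat p a * b := hb
      _ = p ^ padicValNat p a * (p * c) := by rw [hc]
      _ = p ^ (padicValNat p a + 1) * c := by ring
  have hkn : padicValNat p a < n := by
    by_contra h
    push_neg at h
    have h1 : p ^ n ∣ a := dvd_trans (pow_dvd_pow p h) ⟨b, hb⟩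
    have := Nat.le_of_dvd (Nat.pos_of_ne_zero ha0) h1
    omega
  refine ⟨padicValNat p a, hkn, (b : ZMod (p^n)), ?_, ?_⟩
  · rw [ZMod.isUnit_iff_coprime]
    exact ((hp.coprime_iff_not_dvd.mpr hnb).symm).pow_right n
  · rw [← hxa]
    conv_lhs => rw [hb]
    push_cast
    ring

lemma monotone_cons9 {m : ℕ} (a : ℕ) (f : Fin m → ℕ) (hf : Monotone f) (ha : ∀ j, a ≤ f j) :
    Monotone (Fin.cons a f : Fin (m+1) → ℕ) := by
  intro b c hbc
  rcases Fin.eq_zero_or_eq_succ b with rfl | ⟨b', rfl⟩ <;>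
    rcases Fin.eq_zero_or_eq_succ c with rfl | ⟨c', rfl⟩
  · exact le_refl _
  · simpa using ha c'
  · exact absurd hbc (by simp [Fin.le_def])
  · have h : b' ≤ c' := by rwa [Fin.succ_le_succ_iff] at hbc
    simpa using hf h

lemma aux9 (p n d : ℕ) (hp : p.Prime) :
    ∀ (s : ℕ) (L : Submodule (ZMod (p^n)) (Fin d → ZMod (p^n))), (Supp9 L).card ≤ s →
    ∃ (m : ℕ), m ≤ (Supp9 L).card ∧
      ∃ (τ : Fin m → Fin d) (i : Fin m → ℕ) (v : Fin m → (Fin d → ZMod (p^n))),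
        Function.Injective τ ∧
        Monotone i ∧
        (∀ j : Fin m, i j < n) ∧
        Submodule.span (ZMod (p^n)) (Set.range v) = L ∧
        (∀ j : Fin m, v j ∈ L) ∧
        (∀ j : Fin m, v j (τ j) = (p : ZMod (p^n)) ^ (i j)) ∧
        (∀ j j' : Fin m, j' < j → v j (τ j') = 0) ∧
        (∀ j : Fin m, ∀ t : Fin d, ∃ u : ZMod (p^n),
          v j t = (p : ZMod (p^n)) ^ (i j) * u) := by
  classical
  set R := ZMod (p^n)
  intro s
  induction s with
  | zero =>
    intro L hL
    -- L must be ⊥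
    have hbot : ∀ x ∈ L, x = 0 := by
      intro x hx
      funext t
      by_contra h
      have : t ∈ Supp9 L := (mem_Supp9 L t).mpr ⟨x, hx, h⟩
      have := Finset.card_pos.mpr ⟨t, this⟩
      omega
    refine ⟨0, Nat.zero_le _, Fin.elim0, Fin.elim0, Fin.elim0,
      fun j => j.elim0, fun j => j.elim0, fun j => j.elim0, ?_,
      fun j => j.elim0, fun j => j.elim0, fun j => j.elim0, fun j => j.elim0⟩
    rw [Set.range_eq_empty, Submodule.span_empty]
    exact (Submodule.eq_bot_iff L).mpr hbot |>.symm
  | succ s IH =>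
    intro L hL
    by_cases hLbot : L = ⊥
    · refine ⟨0, Nat.zero_le _, Fin.elim0, Fin.elim0, Fin.elim0,
        fun j => j.elim0, fun j => j.elim0, fun j => j.elim0, ?_,
        fun j => j.elim0, fun j => j.elim0, fun j => j.elim0, fun j => j.elim0⟩
      rw [Set.range_eq_empty, Submodule.span_empty, hLbot]
    -- there is a nonzero element
    obtain ⟨x0, hx0L, hx0⟩ := Submodule.ne_bot_iff L |>.mp hLbot
    obtain ⟨t0, ht0⟩ : ∃ t, x0 t ≠ 0 := by
      by_contra h
      push_neg at h
      exact hx0 (funext h)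
    -- minimal valuation
    set Q : ℕ → Prop := fun k => ∃ x ∈ L, ∃ t, ∃ u : R, IsUnit u ∧ x t = (p : R) ^ k * u with hQdef
    have hQex : ∃ k, Q k := by
      obtain ⟨k, _, u, hu, he⟩ := exists_val9 hp (x0 t0) ht0
      exact ⟨k, x0, hx0L, t0, u, hu, he⟩
    set i1 := Nat.find hQex with hi1def
    obtain ⟨x1, hx1L, t1, u1, hu1, hx1t⟩ : Q i1 := Nat.find_spec hQex
    have hi1n : i1 < n := by
      obtain ⟨k, hk, u, hu, he⟩ := exists_val9 hp (x0 t0) ht0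
      have : i1 ≤ k := Nat.find_le ⟨x0, hx0L, t0, u, hu, he⟩
      omega
    -- minimality: all coordinates of all elements of L are divisible by p^i1
    have div1 : ∀ y ∈ L, ∀ t, ∃ c : R, y t = (p : R) ^ i1 * c := by
      intro y hy t
      by_cases h : y t = 0
      · exact ⟨0, by rw [h, mul_zero]⟩
      · obtain ⟨k, hk, u, hu, he⟩ := exists_val9 hp (y t) h
        have hik : i1 ≤ k := Nat.find_le ⟨y, hy, t, u, hu, he⟩
        refine ⟨(p : R) ^ (k - i1) * u, ?_⟩
        rw [he, ← mul_assoc, ← pow_add]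
        congr 2
        omega
    -- normalize x1
    obtain ⟨U, hU⟩ := hu1
    set v1 : Fin d → R := ((U⁻¹ : Rˣ) : R) • x1 with hv1def
    have hv1L : v1 ∈ L := L.smul_mem _ hx1L
    have hv1t1 : v1 t1 = (p : R) ^ i1 := by
      show ((U⁻¹ : Rˣ) : R) * x1 t1 = _
      rw [hx1t, ← hU]
      calc ((U⁻¹ : Rˣ) : R) * ((p : R) ^ i1 * (U : R))
          = (p : R) ^ i1 * (((U⁻¹ : Rˣ) : R) * (U : R)) := by ring
        _ = (p : R) ^ i1 := by rw [← Units.val_mul, inv_mul_cancel]; simp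
    have hv1div : ∀ t, ∃ c : R, v1 t = (p : R) ^ i1 * c := by
      intro t
      obtain ⟨c, hc⟩ := div1 x1 hx1L t
      refine ⟨((U⁻¹ : Rˣ) : R) * c, ?_⟩
      show ((U⁻¹ : Rˣ) : R) * x1 t = _
      rw [hc]; ring
    -- t1 in support
    have ht1supp : t1 ∈ Supp9 L := by
      rw [mem_Supp9]
      refine ⟨v1, hv1L, ?_⟩
      rw [hv1t1]
      exact pow_p_ne_zero9 hp hi1n
    -- smaller submodule
    set L0 : Submodule R (Fin d → R) :=
      L ⊓ LinearMap.ker (LinearMap.proj t1 : (Fin d → R) →ₗ[R] R) with hL0def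
    have hL0mem : ∀ x, x ∈ L0 ↔ x ∈ L ∧ x t1 = 0 := by
      intro x
      simp [hL0def, Submodule.mem_inf, LinearMap.mem_ker]
    have hsuppss : Supp9 L0 ⊆ Supp9 L := by
      intro t ht
      rw [mem_Supp9] at ht ⊢
      obtain ⟨x, hx, hxt⟩ := ht
      exact ⟨x, ((hL0mem x).mp hx).1, hxt⟩
    have ht1not : t1 ∉ Supp9 L0 := by
      rw [mem_Supp9]
      rintro ⟨x, hx, hxt⟩
      exact hxt ((hL0mem x).mp hx).2
    have hcard : (Supp9 L0).card < (Supp9 L).card :=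
      Finset.card_lt_card ⟨hsuppss, fun h => ht1not (h ht1supp)⟩
    obtain ⟨m', hm', τ', i', v', hτ'inj, hi'mono, hi'n, hspan', hmem', hpiv', hech', hdiv'⟩ :=
      IH L0 (by omega)
    -- facts about v'
    have hv'L : ∀ j, v' j ∈ L := fun j => ((hL0mem _).mp (hmem' j)).1
    have hv't1 : ∀ j, v' j t1 = 0 := fun j => ((hL0mem _).mp (hmem' j)).2
    have hi1le : ∀ j, i1 ≤ i' j := by
      intro j
      exact Nat.find_le ⟨v' j, hv'L j, τ' j, 1, isUnit_one, by rw [hpiv' j, mul_one]⟩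
    have hτ'ne : ∀ j, τ' j ≠ t1 := by
      intro j h
      have := hpiv' j
      rw [h, hv't1 j] at this
      exact pow_p_ne_zero9 hp (hi'n j) this.symm
    refine ⟨m' + 1, by omega, Fin.cons t1 τ', Fin.cons i1 i', Fin.cons v1 v', ?_, ?_, ?_, ?_, ?_, ?_, ?_, ?_⟩
    · -- injectivity
      intro a b hab
      rcases Fin.eq_zero_or_eq_succ a with rfl | ⟨a', rfl⟩ <;>
        rcases Fin.eq_zero_or_eq_succ b with rfl | ⟨b', rfl⟩
      · rfl
      · simp only [Fin.cons_zero, Fin.cons_succ] at hab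
        exact absurd hab.symm (hτ'ne b')
      · simp only [Fin.cons_zero, Fin.cons_succ] at hab
        exact absurd hab (hτ'ne a')
      · simp only [Fin.cons_succ] at hab
        exact congrArg Fin.succ (hτ'inj hab)
    · exact monotone_cons9 i1 i' hi'mono hi1le
    · intro j
      rcases Fin.eq_zero_or_eq_succ j with rfl | ⟨j', rfl⟩
      · simpa using hi1n
      · simpa using hi'n j'
    · -- span
      apply le_antisymm
      · rw [Submodule.span_le]
        rintro _ ⟨j, rfl⟩
        rcases Fin.eq_zero_or_eq_succ j with rfl | ⟨j', rfl⟩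
        · simpa using hv1L
        · simpa using hv'L j'
      · intro x hx
        obtain ⟨c, hc⟩ := div1 x hx t1
        have hxm : x - c • v1 ∈ L0 := by
          rw [hL0mem]
          refine ⟨L.sub_mem hx (L.smul_mem c hv1L), ?_⟩
          show x t1 - c * v1 t1 = 0
          rw [hc, hv1t1]; ring
        have hrange : Set.range v' ⊆ Set.range (Fin.cons v1 v' : Fin (m'+1) → _) := by
          rintro _ ⟨j, rfl⟩
          exact ⟨j.succ, by simp⟩
        have h1 : x - c • v1 ∈ Submodule.span R (Set.range (Fin.cons v1 v' : Fin (m'+1) → _)) := by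
          apply Submodule.span_mono hrange
          rw [hspan']
          exact hxm
        have h2 : v1 ∈ Submodule.span R (Set.range (Fin.cons v1 v' : Fin (m'+1) → _)) :=
          Submodule.subset_span ⟨0, by simp⟩
        have := Submodule.add_mem _ h1 (Submodule.smul_mem _ c h2)
        simpa using this
    · intro j
      rcases Fin.eq_zero_or_eq_succ j with rfl | ⟨j', rfl⟩
      · simpa using hv1L
      · simpa using hv'L j'
    · intro j
      rcases Fin.eq_zero_or_eq_succ j with rfl | ⟨j', rfl⟩
      · simpa using hv1t1
      · simpa using hpiv' j'
    · intro j j' hjj'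
      rcases Fin.eq_zero_or_eq_succ j with rfl | ⟨j0, rfl⟩
      · exact absurd hjj' (by simp [Fin.lt_def])
      · rcases Fin.eq_zero_or_eq_succ j' with rfl | ⟨j0', rfl⟩
        · simpa using hv't1 j0
        · have h : j0' < j0 := by
            rwa [Fin.succ_lt_succ_iff] at hjj'
          simp only [Fin.cons_succ]
          exact hech' j0 j0' h
    · intro j t
      rcases Fin.eq_zero_or_eq_succ j with rfl | ⟨j', rfl⟩
      · simpa using hv1div t
      · simp only [Fin.cons_succ]
        exact hdiv' j' t

theorem stmt_9 (p n d : ℕ) (hp : p.Prime) (hn : 0 < n) (hd : 0 < d)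
    (L : Submodule (ZMod (p ^ n)) (Fin d → ZMod (p ^ n))) :
    ∃ (m : ℕ), m ≤ d ∧
      ∃ (τ : Fin m → Fin d) (i : Fin m → ℕ) (v : Fin m → (Fin d → ZMod (p ^ n))),
        Function.Injective τ ∧
        Monotone i ∧
        (∀ j : Fin m, i j ≤ n - 1) ∧
        Submodule.span (ZMod (p ^ n)) (Set.range v) = L ∧
        (∀ j : Fin m, v j (τ j) = (p : ZMod (p ^ n)) ^ (i j)) ∧
        (∀ j j' : Fin m, j' < j → v j (τ j') = 0) ∧
        (∀ j : Fin m, ∀ t : Fin d, ∃ u : ZMod (p ^ n),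
          v j t = (p : ZMod (p ^ n)) ^ (i j) * u) := by
  obtain ⟨m, hm, τ, i, v, h1, h2, h3, h4, _, h6, h7, h8⟩ :=
    aux9 p n d hp (Supp9 L).card L le_rfl
  have hcard : (Supp9 L).card ≤ d := by
    have := Finset.card_le_univ (Supp9 L)
    simpa using this
  exact ⟨m, le_trans hm hcard, τ, i, v, h1, h2,
    fun j => Nat.le_pred_of_lt (h3 j), h4, h6, h7, h8⟩
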